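/- Let (u_t)_{t=1}^T be IID with mean 0, variance σ_x² ≤ K, and E(u_t^4) ≤ K. Let x̃_t be the demeaned random walk built from (u_t). Then E[(T^{-1} ∑_{t=1}^T u_t x̃_t)²] ≤ C for a constant C depending only on K (not on T). -/

import Mathlib

open MeasureTheory ProbabilityTheory Finset

noncomputable def coef (T : ℕ) : ℕ × ℕ → ℝ := fun p =>
  (T : ℝ)⁻¹ * ((if p.2 ≤ p.1 then (1:ℝ) else 0) - (T : ℝ)⁻¹ * ((Finset.Icc p.2 T).card : ℝ))

lemma key_rw (T : ℕ) (v : ℕ → ℝ) :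
    (T : ℝ)⁻¹ * ∑ t ∈ Finset.Icc 1 T, v t *
        ((∑ s ∈ Finset.Icc 1 t, v s)
          - (T : ℝ)⁻¹ * ∑ r ∈ Finset.Icc 1 T, ∑ s ∈ Finset.Icc 1 r, v s)
      = ∑ t ∈ Finset.Icc 1 T, ∑ s ∈ Finset.Icc 1 T,
          ((T : ℝ)⁻¹ * ((if s ≤ t then (1:ℝ) else 0)
              - (T : ℝ)⁻¹ * ((Finset.Icc s T).card : ℝ))) * (v t * v s) := by
  have key2 : ∑ r ∈ Finset.Icc 1 T, ∑ s ∈ Finset.Icc 1 r, v s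
      = ∑ s ∈ Finset.Icc 1 T, ((Finset.Icc s T).card : ℝ) * v s := by
    rw [Finset.sum_comm' (t' := Finset.Icc 1 T) (s' := fun s => Finset.Icc s T)
      (by intro x y; simp only [Finset.mem_Icc]; omega)]
    simp [Finset.sum_const, nsmul_eq_mul]
  rw [key2, Finset.mul_sum]
  apply Finset.sum_congr rfl
  intro t ht
  rw [Finset.mem_Icc] at ht
  have key1 : (∑ s ∈ Finset.Icc 1 t, v s)
      = ∑ s ∈ Finset.Icc 1 T, (if s ≤ t then (1:ℝ) else 0) * v s := by
    simp only [ite_mul, one_mul, zero_mul]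
    rw [← Finset.sum_filter]
    apply Finset.sum_congr _ (fun _ _ => rfl)
    ext s; simp only [Finset.mem_Icc, Finset.mem_filter]; omega
  rw [key1, show (↑T:ℝ)⁻¹ * ∑ s ∈ Finset.Icc 1 T, ((Finset.Icc s T).card : ℝ) * v s
      = ∑ s ∈ Finset.Icc 1 T, (↑T:ℝ)⁻¹ * (((Finset.Icc s T).card : ℝ) * v s)
      from Finset.mul_sum _ _ _, ← Finset.sum_sub_distrib, Finset.mul_sum, Finset.mul_sum]
  apply Finset.sum_congr rfl
  intro s hs
  ring

lemma key_rw2 (T : ℕ) (v : ℕ → ℝ) :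
    ((T : ℝ)⁻¹ * ∑ t ∈ Finset.Icc 1 T, v t *
        ((∑ s ∈ Finset.Icc 1 t, v s)
          - (T : ℝ)⁻¹ * ∑ r ∈ Finset.Icc 1 T, ∑ s ∈ Finset.Icc 1 r, v s)) ^ 2
      = ∑ z ∈ (Finset.Icc 1 T ×ˢ Finset.Icc 1 T) ×ˢ (Finset.Icc 1 T ×ˢ Finset.Icc 1 T),
          (coef T z.1 * coef T z.2) * (v z.1.1 * v z.1.2 * v z.2.1 * v z.2.2) := by
  rw [key_rw, ← Finset.sum_product', pow_two, Finset.sum_mul_sum, ← Finset.sum_product']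
  apply Finset.sum_congr rfl
  intro z hz
  simp only [coef]
  ring

lemma coef_abs_le (T : ℕ) (hT : 0 < T) (p : ℕ × ℕ) (hp1 : 1 ≤ p.2) :
    |coef T p| ≤ (T : ℝ)⁻¹ := by
  have hTpos : (0:ℝ) < (T:ℝ) := by exact_mod_cast hT
  have hcard : ((Finset.Icc p.2 T).card : ℝ) ≤ (T : ℝ) := by
    rw [Nat.card_Icc]; exact_mod_cast Nat.sub_le_of_le_add (by omega)
  have hcard0 : (0:ℝ) ≤ ((Finset.Icc p.2 T).card : ℝ) := by positivity
  have h2 : (0:ℝ) ≤ (T:ℝ)⁻¹ * ((Finset.Icc p.2 T).card : ℝ) := by positivity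
  have h3 : (T:ℝ)⁻¹ * ((Finset.Icc p.2 T).card : ℝ) ≤ 1 := by
    rw [inv_mul_le_iff₀ hTpos]; linarith
  rw [coef, abs_mul, abs_of_nonneg (by positivity : (0:ℝ) ≤ (T:ℝ)⁻¹)]
  have h4 : |(if p.2 ≤ p.1 then (1:ℝ) else 0) - (T:ℝ)⁻¹ * ((Finset.Icc p.2 T).card : ℝ)| ≤ 1 := by
    rw [abs_le]; constructor <;> split_ifs <;> linarith
  calc (T:ℝ)⁻¹ * |(if p.2 ≤ p.1 then (1:ℝ) else 0) - (T:ℝ)⁻¹ * ((Finset.Icc p.2 T).card : ℝ)|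
      ≤ (T:ℝ)⁻¹ * 1 := mul_le_mul_of_nonneg_left h4 (by positivity)
    _ = (T:ℝ)⁻¹ := mul_one _

lemma abs4 (a b c d : ℝ) : |a * b * c * d| ≤ (a^4 + b^4 + c^4 + d^4) / 4 := by
  rw [abs_le]
  constructor <;> nlinarith [sq_nonneg (a*b - c*d), sq_nonneg (a*b + c*d), sq_nonneg (a^2 - b^2),
    sq_nonneg (c^2 - d^2), sq_nonneg (a^2 + b^2), sq_nonneg (c^2 + d^2)]

lemma int_zero {Ω : Type} [MeasureSpace Ω] [IsProbabilityMeasure (ℙ : Measure Ω)]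
    (u : ℕ → Ω → ℝ) (hm : ∀ t, Measurable (u t))
    (hind : iIndepFun u ℙ)
    (hmean : ∀ t, ∫ ω, u t ω = 0) (a b c d : ℕ) (hab : a ≠ b) (hac : a ≠ c) (had : a ≠ d) :
    ∫ ω, u a ω * (u b ω * u c ω * u d ω) = 0 := by
  classical
  have hdisj : Disjoint ({a} : Finset ℕ) ({b, c, d} : Finset ℕ) := by
    simp [Finset.disjoint_left, hab, hac, had]
  have H := hind.indepFun_finset {a} {b, c, d} hdisj hm
  have hbm : b ∈ ({b, c, d} : Finset ℕ) := by simp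
  have hcm : c ∈ ({b, c, d} : Finset ℕ) := by simp
  have hdm : d ∈ ({b, c, d} : Finset ℕ) := by simp
  have ham : a ∈ ({a} : Finset ℕ) := by simp
  set φ : (({a} : Finset ℕ) → ℝ) → ℝ := fun v => v ⟨a, ham⟩ with hφ
  set ψ : (({b, c, d} : Finset ℕ) → ℝ) → ℝ := fun v => v ⟨b, hbm⟩ * v ⟨c, hcm⟩ * v ⟨d, hdm⟩ with hψ
  have hφm : Measurable φ := measurable_pi_apply _
  have hψm : Measurable ψ := by
    apply Measurable.mul
    apply Measurable.mul
    all_goals exact measurable_pi_apply _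
  have H2 : IndepFun (fun ω => u a ω) (fun ω => u b ω * u c ω * u d ω) ℙ :=
    H.comp hφm hψm
  rw [H2.integral_fun_mul_eq_mul_integral ((hm a).aestronglyMeasurable)
    (((hm b).mul (hm c)).mul (hm d)).aestronglyMeasurable, hmean a, zero_mul]

lemma caseA (K : ℝ) (hK : 0 < K) (T : ℕ) (hT : 0 < T)
    (Ω : Type) [MeasureSpace Ω] [IsProbabilityMeasure (ℙ : Measure Ω)]
    (u : ℕ → Ω → ℝ) (σx : ℝ)
    (hm : ∀ t, Measurable (u t))
    (hind : iIndepFun u ℙ)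
    (hid : ∀ s t, IdentDistrib (u s) (u t) ℙ ℙ)
    (hmean : ∀ t, ∫ ω, u t ω = 0)
    (hvar : ∀ t, ∫ ω, (u t ω) ^ 2 = σx ^ 2) (hσK : σx ^ 2 ≤ K)
    (h4 : ∀ t, ∫ ω, (u t ω) ^ 4 ≤ K)
    (hL4 : Integrable (fun ω => (u 0 ω)^4)) :
    (∫ ω, ((T : ℝ)⁻¹ * ∑ t ∈ Finset.Icc 1 T, u t ω *
        ((∑ s ∈ Finset.Icc 1 t, u s ω)
          - (T : ℝ)⁻¹ * ∑ r ∈ Finset.Icc 1 T, ∑ s ∈ Finset.Icc 1 r, u s ω)) ^ 2)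
      ≤ 3 * (K + K ^ 2) := by
  classical
  have hTpos : (0:ℝ) < (T:ℝ) := by exact_mod_cast hT
  -- integrability
  have hInt4 : ∀ t, Integrable (fun ω => (u t ω)^4) := by
    intro t
    exact ((hid 0 t).comp (measurable_id.pow_const 4)).integrable_iff.mp hL4
  have hIntProd : ∀ a b c d : ℕ, Integrable (fun ω => u a ω * u b ω * u c ω * u d ω) := by
    intro a b c d
    apply Integrable.mono'
      (g := fun ω => ((u a ω)^4 + (u b ω)^4 + (u c ω)^4 + (u d ω)^4)/4)
    · exact ((((hInt4 a).add (hInt4 b)).add (hInt4 c)).add (hInt4 d)).div_const 4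
    · exact ((((hm a).mul (hm b)).mul (hm c)).mul (hm d)).aestronglyMeasurable
    · exact ae_of_all _ fun ω => by rw [Real.norm_eq_abs]; exact abs4 _ _ _ _
  set E := (Finset.Icc 1 T ×ˢ Finset.Icc 1 T) ×ˢ (Finset.Icc 1 T ×ˢ Finset.Icc 1 T) with hE
  -- rewrite the integral as a finite sum
  have hfun : (fun ω => ((T : ℝ)⁻¹ * ∑ t ∈ Finset.Icc 1 T, u t ω *
        ((∑ s ∈ Finset.Icc 1 t, u s ω)
          - (T : ℝ)⁻¹ * ∑ r ∈ Finset.Icc 1 T, ∑ s ∈ Finset.Icc 1 r, u s ω)) ^ 2)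
      = fun ω => ∑ z ∈ E, (coef T z.1 * coef T z.2) *
          (u z.1.1 ω * u z.1.2 ω * u z.2.1 ω * u z.2.2 ω) := by
    funext ω
    exact key_rw2 T (fun s => u s ω)
  rw [hfun, integral_finset_sum _ (fun z _ => ((hIntProd z.1.1 z.1.2 z.2.1 z.2.2).const_mul _))]
  simp only [integral_const_mul]
  -- classification of fourth moments
  have hABle : ∀ a b : ℕ, |∫ ω, (u a ω)^2 * (u b ω)^2| ≤ K + K^2 := by
    intro a b
    by_cases hab : a = b
    · subst hab
      rw [show (fun ω => (u a ω)^2*(u a ω)^2) = fun ω => (u a ω)^4 from funext fun ω => by ring]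
      rw [abs_of_nonneg (integral_nonneg fun ω => by positivity)]
      nlinarith [h4 a, sq_nonneg K]
    · have hif : IndepFun (fun ω => (u a ω)^2) (fun ω => (u b ω)^2) ℙ :=
        (hind.indepFun hab).comp (measurable_id.pow_const 2) (measurable_id.pow_const 2)
      rw [hif.integral_fun_mul_eq_mul_integral ((hm a).pow_const 2).aestronglyMeasurable
        ((hm b).pow_const 2).aestronglyMeasurable, hvar a, hvar b,
        abs_of_nonneg (by positivity)]
      nlinarith [sq_nonneg σx, hσK, hK.le]
  have hJle : ∀ t s t' s' : ℕ, ((t = s ∧ t' = s') ∨ (t = t' ∧ s = s') ∨ (t = s' ∧ s = t')) →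
      |∫ ω, u t ω * u s ω * u t' ω * u s' ω| ≤ K + K^2 := by
    intro t s t' s' h
    rcases h with ⟨h1, h2⟩ | ⟨h1, h2⟩ | ⟨h1, h2⟩ <;> subst h1 <;> subst h2
    · rw [show (fun ω => u t ω * u t ω * u t' ω * u t' ω)
        = fun ω => (u t ω)^2 * (u t' ω)^2 from funext fun ω => by ring]
      exact hABle t t'
    · rw [show (fun ω => u t ω * u s ω * u t ω * u s ω)
        = fun ω => (u t ω)^2 * (u s ω)^2 from funext fun ω => by ring]
      exact hABle t s
    · rw [show (fun ω => u t ω * u s ω * u s ω * u t ω)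
        = fun ω => (u t ω)^2 * (u s ω)^2 from funext fun ω => by ring]
      exact hABle t s
  have hJ0 : ∀ t s t' s' : ℕ, ¬((t = s ∧ t' = s') ∨ (t = t' ∧ s = s') ∨ (t = s' ∧ s = t')) →
      (∫ ω, u t ω * u s ω * u t' ω * u s' ω) = 0 := by
    intro t s t' s' hna
    obtain ⟨h1, h2, h3⟩ : ¬(t = s ∧ t' = s') ∧ ¬(t = t' ∧ s = s') ∧ ¬(t = s' ∧ s = t') := by
      tauto
    by_cases hts : t = s
    · subst hts
      have ht's' : t' ≠ s' := fun h => h1 ⟨rfl, h⟩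
      by_cases h : t = t'
      · subst h
        rw [show (fun ω => u t ω * u t ω * u t ω * u s' ω)
          = fun ω => u s' ω * (u t ω * u t ω * u t ω) from funext fun ω => by ring]
        exact int_zero u hm hind hmean s' t t t (Ne.symm ht's') (Ne.symm ht's') (Ne.symm ht's')
      · by_cases h' : t = s'
        · subst h'
          rw [show (fun ω => u t ω * u t ω * u t' ω * u t ω)
            = fun ω => u t' ω * (u t ω * u t ω * u t ω) from funext fun ω => by ring]
          exact int_zero u hm hind hmean t' t t t (Ne.symm h) (Ne.symm h) (Ne.symm h)
        · rw [show (fun ω => u t ω * u t ω * u t' ω * u s' ω)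
            = fun ω => u t' ω * (u t ω * u t ω * u s' ω) from funext fun ω => by ring]
          exact int_zero u hm hind hmean t' t t s' (Ne.symm h) (Ne.symm h) ht's'
    · by_cases ht's' : t' = s'
      · subst ht's'
        by_cases h : t = t'
        · subst h
          rw [show (fun ω => u t ω * u s ω * u t ω * u t ω)
            = fun ω => u s ω * (u t ω * u t ω * u t ω) from funext fun ω => by ring]
          exact int_zero u hm hind hmean s t t t (Ne.symm hts) (Ne.symm hts) (Ne.symm hts)
        · by_cases h' : s = t'
          · subst h'
            rw [show (fun ω => u t ω * u s ω * u s ω * u s ω)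
              = fun ω => u t ω * (u s ω * u s ω * u s ω) from funext fun ω => by ring]
            exact int_zero u hm hind hmean t s s s hts hts hts
          · rw [show (fun ω => u t ω * u s ω * u t' ω * u t' ω)
              = fun ω => u t ω * (u s ω * u t' ω * u t' ω) from funext fun ω => by ring]
            exact int_zero u hm hind hmean t s t' t' hts h h
      · by_cases h : t = t'
        · subst h
          have hss' : s ≠ s' := fun hh => h2 ⟨rfl, hh⟩
          rw [show (fun ω => u t ω * u s ω * u t ω * u s' ω)
            = fun ω => u s ω * (u t ω * u t ω * u s' ω) from funext fun ω => by ring]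
          exact int_zero u hm hind hmean s t t s' (Ne.symm hts) (Ne.symm hts) hss'
        · by_cases h' : t = s'
          · subst h'
            have hst' : s ≠ t' := fun hh => h3 ⟨rfl, hh⟩
            rw [show (fun ω => u t ω * u s ω * u t' ω * u t ω)
              = fun ω => u s ω * (u t ω * u t' ω * u t ω) from funext fun ω => by ring]
            exact int_zero u hm hind hmean s t t' t (Ne.symm hts) hst' (Ne.symm hts)
          · rw [show (fun ω => u t ω * u s ω * u t' ω * u s' ω)
              = fun ω => u t ω * (u s ω * u t' ω * u s' ω) from funext fun ω => by ring]
            exact int_zero u hm hind hmean t s t' s' hts h h'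
  -- the sum bound
  set P : (ℕ × ℕ) × (ℕ × ℕ) → Prop := fun z =>
    (z.1.1 = z.1.2 ∧ z.2.1 = z.2.2) ∨ (z.1.1 = z.2.1 ∧ z.1.2 = z.2.2)
      ∨ (z.1.1 = z.2.2 ∧ z.1.2 = z.2.1) with hP
  have hzero : ∀ z ∈ E, (coef T z.1 * coef T z.2 *
      ∫ ω, u z.1.1 ω * u z.1.2 ω * u z.2.1 ω * u z.2.2 ω) ≠ 0 → P z := by
    intro z _ hne
    by_contra hPz
    exact hne (by rw [hJ0 _ _ _ _ hPz, mul_zero])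
  rw [← Finset.sum_filter_of_ne hzero]
  have hb : ∀ z ∈ E.filter P, coef T z.1 * coef T z.2 *
      (∫ ω, u z.1.1 ω * u z.1.2 ω * u z.2.1 ω * u z.2.2 ω)
      ≤ (T:ℝ)⁻¹ * (T:ℝ)⁻¹ * (K + K^2) := by
    intro z hz
    obtain ⟨hzE, hPz⟩ := Finset.mem_filter.1 hz
    obtain ⟨hz1, hz2⟩ := Finset.mem_product.1 hzE
    obtain ⟨hz11, hz12⟩ := Finset.mem_product.1 hz1
    obtain ⟨hz21, hz22⟩ := Finset.mem_product.1 hz2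
    refine le_trans (le_abs_self _) ?_
    rw [abs_mul, abs_mul]
    have h1 := coef_abs_le T hT z.1 (Finset.mem_Icc.1 hz12).1
    have h2 := coef_abs_le T hT z.2 (Finset.mem_Icc.1 hz22).1
    have h3 := hJle z.1.1 z.1.2 z.2.1 z.2.2 hPz
    have hTi : (0:ℝ) ≤ (T:ℝ)⁻¹ := by positivity
    exact mul_le_mul (mul_le_mul h1 h2 (abs_nonneg _) hTi) h3 (abs_nonneg _)
      (by positivity)
  have hcard : ((E.filter P).card : ℝ) ≤ 3 * (T:ℝ)^2 := by
    have step : (E.filter P).card ≤ 3 * T^2 := by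
      have e1 : E.filter P = (E.filter (fun z => z.1.1 = z.1.2 ∧ z.2.1 = z.2.2))
          ∪ ((E.filter (fun z => z.1.1 = z.2.1 ∧ z.1.2 = z.2.2))
            ∪ E.filter (fun z => z.1.1 = z.2.2 ∧ z.1.2 = z.2.1)) := by
        ext z
        simp only [Finset.mem_union, Finset.mem_filter, hP]
        tauto
      have hcard0 : (Finset.Icc 1 T ×ˢ Finset.Icc 1 T).card = T^2 := by
        rw [Finset.card_product, Nat.card_Icc]
        simp [pow_two]
      have key : ∀ (q : (ℕ × ℕ) × (ℕ × ℕ) → Prop) (_ : DecidablePred q)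
          (g : (ℕ × ℕ) × (ℕ × ℕ) → ℕ × ℕ)
          (hg : ∀ z, g z = (z.1.1, z.2.1) ∨ g z = z.1)
          (hdet : ∀ z w, q z → q w → g z = g w → z = w),
          (E.filter q).card ≤ T^2 := by
        intro q _ g hg hdet
        rw [← hcard0]
        apply Finset.card_le_card_of_injOn g
        · intro z hz
          obtain ⟨hzE, _⟩ := Finset.mem_filter.1 hz
          obtain ⟨hz1, hz2⟩ := Finset.mem_product.1 hzE
          obtain ⟨hz11, _⟩ := Finset.mem_product.1 hz1
          obtain ⟨hz21, _⟩ := Finset.mem_product.1 hz2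
          rcases hg z with h | h <;> rw [h]
          · exact Finset.mem_product.2 ⟨hz11, hz21⟩
          · exact hz1
        · intro z hz w hw hgz
          exact hdet z w (Finset.mem_filter.1 hz).2 (Finset.mem_filter.1 hw).2 hgz
      have c1 := key (fun z => z.1.1 = z.1.2 ∧ z.2.1 = z.2.2) (by infer_instance)
        (fun z => (z.1.1, z.2.1)) (fun z => Or.inl rfl) ?inj1
      have c2 := key (fun z => z.1.1 = z.2.1 ∧ z.1.2 = z.2.2) (by infer_instance)
        (fun z => z.1) (fun z => Or.inr rfl) ?inj2
      have c3 := key (fun z => z.1.1 = z.2.2 ∧ z.1.2 = z.2.1) (by infer_instance)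
        (fun z => z.1) (fun z => Or.inr rfl) ?inj3
      case inj1 =>
        rintro ⟨⟨a, b⟩, ⟨c, d⟩⟩ ⟨⟨a', b'⟩, ⟨c', d'⟩⟩ hq hq' hgg
        simp only [Prod.mk.injEq] at hq hq' hgg ⊢
        omega
      case inj2 =>
        rintro ⟨⟨a, b⟩, ⟨c, d⟩⟩ ⟨⟨a', b'⟩, ⟨c', d'⟩⟩ hq hq' hgg
        simp only [Prod.mk.injEq] at hq hq' hgg ⊢
        omega
      case inj3 =>
        rintro ⟨⟨a, b⟩, ⟨c, d⟩⟩ ⟨⟨a', b'⟩, ⟨c', d'⟩⟩ hq hq' hgg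
        simp only [Prod.mk.injEq] at hq hq' hgg ⊢
        omega
      calc (E.filter P).card
          ≤ (E.filter (fun z => z.1.1 = z.1.2 ∧ z.2.1 = z.2.2)).card
            + ((E.filter (fun z => z.1.1 = z.2.1 ∧ z.1.2 = z.2.2)).card
              + (E.filter (fun z => z.1.1 = z.2.2 ∧ z.1.2 = z.2.1)).card) := by
            rw [e1]
            exact le_trans (Finset.card_union_le _ _)
              (by gcongr; exact Finset.card_union_le _ _)
        _ ≤ T^2 + (T^2 + T^2) := by gcongr
        _ = 3 * T^2 := by ring
    calc ((E.filter P).card : ℝ) ≤ ((3 * T^2 : ℕ) : ℝ) := by exact_mod_cast step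
      _ = 3 * (T:ℝ)^2 := by push_cast; ring
  calc ∑ z ∈ E.filter P, coef T z.1 * coef T z.2 *
        (∫ ω, u z.1.1 ω * u z.1.2 ω * u z.2.1 ω * u z.2.2 ω)
      ≤ (E.filter P).card • ((T:ℝ)⁻¹ * (T:ℝ)⁻¹ * (K + K^2)) :=
        Finset.sum_le_card_nsmul _ _ _ hb
    _ = ((E.filter P).card : ℝ) * ((T:ℝ)⁻¹ * (T:ℝ)⁻¹ * (K + K^2)) := nsmul_eq_mul _ _
    _ ≤ (3 * (T:ℝ)^2) * ((T:ℝ)⁻¹ * (T:ℝ)⁻¹ * (K + K^2)) := by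
        apply mul_le_mul_of_nonneg_right hcard (by positivity)
    _ = 3 * (K + K ^ 2) := by field_simp

noncomputable def Pf (T₀ : ℕ) (v : ℕ → ℝ) : ℝ := ∑ s ∈ Finset.Icc 1 T₀, v s
noncomputable def Mf (T₀ : ℕ) (v : ℕ → ℝ) : ℝ := ∑ r ∈ Finset.Icc 1 T₀, ∑ s ∈ Finset.Icc 1 r, v s
noncomputable def Af (T₀ : ℕ) (v : ℕ → ℝ) : ℝ := ∑ t ∈ Finset.Icc 1 T₀, v t * ∑ s ∈ Finset.Icc 1 t, v s
noncomputable def Lf (T₀ : ℕ) (v : ℕ → ℝ) : ℝ :=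
  ((T₀+1 : ℕ) : ℝ)⁻¹ * (Pf T₀ v - ((T₀+1 : ℕ) : ℝ)⁻¹ * (Mf T₀ v + 2 * Pf T₀ v))
noncomputable def Rf (T₀ : ℕ) (v : ℕ → ℝ) : ℝ :=
  ((T₀+1 : ℕ) : ℝ)⁻¹ * (Af T₀ v - ((T₀+1 : ℕ) : ℝ)⁻¹ * ((Mf T₀ v + Pf T₀ v) * Pf T₀ v))
noncomputable def Wf (T₀ : ℕ) (v : ℕ → ℝ) : ℝ :=
  16 * (Lf T₀ v)^4
    + 8 * (((T₀+1 : ℕ) : ℝ)⁻¹ * (1 - ((T₀+1 : ℕ) : ℝ)⁻¹))^2 * (Rf T₀ v)^2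

lemma key_decomp (T₀ : ℕ) (v : ℕ → ℝ) :
    ((T₀+1 : ℕ) : ℝ)⁻¹ * ∑ t ∈ Finset.Icc 1 (T₀+1), v t *
        ((∑ s ∈ Finset.Icc 1 t, v s)
          - ((T₀+1 : ℕ) : ℝ)⁻¹ * ∑ r ∈ Finset.Icc 1 (T₀+1), ∑ s ∈ Finset.Icc 1 r, v s)
      = (((T₀+1 : ℕ) : ℝ)⁻¹ * (1 - ((T₀+1 : ℕ) : ℝ)⁻¹)) * (v (T₀+1))^2
        + Lf T₀ v * v (T₀+1) + Rf T₀ v := by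
  have expand : ∀ c : ℝ, ∑ t ∈ Finset.Icc 1 T₀, v t * ((∑ s ∈ Finset.Icc 1 t, v s) - c)
      = Af T₀ v - Pf T₀ v * c := by
    intro c
    rw [Af, Pf]
    simp_rw [mul_sub]
    rw [Finset.sum_sub_distrib, ← Finset.sum_mul]
  rw [Finset.sum_Icc_succ_top (by omega : 1 ≤ T₀ + 1), expand,
    Finset.sum_Icc_succ_top (by omega : 1 ≤ T₀ + 1)
      (f := fun r => ∑ s ∈ Finset.Icc 1 r, v s),
    Finset.sum_Icc_succ_top (by omega : 1 ≤ T₀ + 1) v]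
  rw [Lf, Rf, Mf, Pf, Af]
  ring

lemma Wf_congr (T₀ : ℕ) (v w : ℕ → ℝ) (h : ∀ i, 1 ≤ i → i ≤ T₀ → v i = w i) :
    Wf T₀ v = Wf T₀ w := by
  have hP : Pf T₀ v = Pf T₀ w := by
    apply Finset.sum_congr rfl
    intro s hs; rw [Finset.mem_Icc] at hs; exact h s hs.1 hs.2
  have hM : Mf T₀ v = Mf T₀ w := by
    apply Finset.sum_congr rfl
    intro r hr; rw [Finset.mem_Icc] at hr
    apply Finset.sum_congr rfl
    intro s hs; rw [Finset.mem_Icc] at hs; exact h s hs.1 (le_trans hs.2 hr.2)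
  have hA : Af T₀ v = Af T₀ w := by
    apply Finset.sum_congr rfl
    intro t ht; rw [Finset.mem_Icc] at ht
    rw [h t ht.1 ht.2]
    congr 1
    apply Finset.sum_congr rfl
    intro s hs; rw [Finset.mem_Icc] at hs; exact h s hs.1 (le_trans hs.2 ht.2)
  rw [Wf, Wf, Lf, Lf, Rf, Rf, hP, hM, hA]

lemma Wf_measurable_comp (T₀ : ℕ) :
    Measurable (fun v : ((Finset.Icc 1 T₀ : Finset ℕ) → ℝ) =>
      Wf T₀ (fun i => if h : i ∈ Finset.Icc 1 T₀ then v ⟨i, h⟩ else 0)) := by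
  have hext : ∀ i : ℕ, Measurable (fun v : ((Finset.Icc 1 T₀ : Finset ℕ) → ℝ) =>
      if h : i ∈ Finset.Icc 1 T₀ then v ⟨i, h⟩ else 0) := by
    intro i
    by_cases h : i ∈ Finset.Icc 1 T₀
    · simp only [dif_pos h]; exact measurable_pi_apply _
    · simp only [dif_neg h]; exact measurable_const
  have hP : Measurable (fun v : ((Finset.Icc 1 T₀ : Finset ℕ) → ℝ) =>
      Pf T₀ (fun i => if h : i ∈ Finset.Icc 1 T₀ then v ⟨i, h⟩ else 0)) := by
    unfold Pf; exact Finset.measurable_sum _ (fun i _ => hext i)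
  have hM : Measurable (fun v : ((Finset.Icc 1 T₀ : Finset ℕ) → ℝ) =>
      Mf T₀ (fun i => if h : i ∈ Finset.Icc 1 T₀ then v ⟨i, h⟩ else 0)) := by
    unfold Mf
    exact Finset.measurable_sum _ (fun r _ => Finset.measurable_sum _ (fun i _ => hext i))
  have hA : Measurable (fun v : ((Finset.Icc 1 T₀ : Finset ℕ) → ℝ) =>
      Af T₀ (fun i => if h : i ∈ Finset.Icc 1 T₀ then v ⟨i, h⟩ else 0)) := by
    unfold Af
    exact Finset.measurable_sum _ (fun t _ =>
      (hext t).mul (Finset.measurable_sum _ (fun i _ => hext i)))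
  have hL : Measurable (fun v : ((Finset.Icc 1 T₀ : Finset ℕ) → ℝ) =>
      Lf T₀ (fun i => if h : i ∈ Finset.Icc 1 T₀ then v ⟨i, h⟩ else 0)) := by
    unfold Lf
    exact ((hP.sub ((hM.add (hP.const_mul 2)).const_mul _)).const_mul _)
  have hR : Measurable (fun v : ((Finset.Icc 1 T₀ : Finset ℕ) → ℝ) =>
      Rf T₀ (fun i => if h : i ∈ Finset.Icc 1 T₀ then v ⟨i, h⟩ else 0)) := by
    unfold Rf
    exact ((hA.sub (((hM.add hP).mul hP).const_mul _)).const_mul _)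
  unfold Wf
  exact ((hL.pow_const 4).const_mul 16).add (((hR.pow_const 2).const_mul _))

lemma caseB (k : ℕ) (Ω : Type) [MeasureSpace Ω] [IsProbabilityMeasure (ℙ : Measure Ω)]
    (u : ℕ → Ω → ℝ)
    (hm : ∀ t, Measurable (u t))
    (hind : iIndepFun u ℙ)
    (hid : ∀ s t, IdentDistrib (u s) (u t) ℙ ℙ)
    (hL4 : ¬ Integrable (fun ω => (u 0 ω)^4))
    (hInt : Integrable (fun ω => (((k+1+1 : ℕ) : ℝ)⁻¹ * ∑ t ∈ Finset.Icc 1 (k+1+1), u t ω *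
        ((∑ s ∈ Finset.Icc 1 t, u s ω)
          - ((k+1+1 : ℕ) : ℝ)⁻¹ * ∑ r ∈ Finset.Icc 1 (k+1+1), ∑ s ∈ Finset.Icc 1 r, u s ω)) ^ 2)) :
    False := by
  classical
  set T₀ := k + 1 with hT₀
  set N : ℝ := ((T₀+1 : ℕ) : ℝ)⁻¹ with hN
  set α : ℝ := N * (1 - N) with hα
  have hNpos : 0 < N := by rw [hN]; positivity
  have hNle : N ≤ 1/2 := by
    rw [hN]
    have h2 : (2:ℝ) ≤ ((T₀+1 : ℕ) : ℝ) := by exact_mod_cast (by omega : 2 ≤ T₀+1)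
    have := inv_anti₀ (by norm_num : (0:ℝ) < 2) h2
    linarith [this]
  have hαpos : 0 < α := by
    rw [hα]; apply mul_pos hNpos; linarith
  set Q : Ω → ℝ := fun ω => ((k+1+1 : ℕ) : ℝ)⁻¹ * ∑ t ∈ Finset.Icc 1 (k+1+1), u t ω *
      ((∑ s ∈ Finset.Icc 1 t, u s ω)
        - ((k+1+1 : ℕ) : ℝ)⁻¹ * ∑ r ∈ Finset.Icc 1 (k+1+1), ∑ s ∈ Finset.Icc 1 r, u s ω)
    with hQ
  set L : Ω → ℝ := fun ω => Lf T₀ (fun s => u s ω) with hL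
  set R : Ω → ℝ := fun ω => Rf T₀ (fun s => u s ω) with hR
  set W : Ω → ℝ := fun ω => Wf T₀ (fun s => u s ω) with hW
  have hdec : ∀ ω, Q ω = α * (u (T₀+1) ω)^2 + L ω * u (T₀+1) ω + R ω := by
    intro ω
    rw [hQ, hα, hN, hL, hR]
    exact key_decomp T₀ (fun s => u s ω)
  have hWval : ∀ ω, W ω = 16 * (L ω)^4 + 8 * α^2 * (R ω)^2 := by
    intro ω
    simp only [hW, Wf, hα, hN, hL, hR]
  -- pointwise inequality
  have hpt : ∀ ω, α^4 * (u (T₀+1) ω)^4 ≤ 4 * α^2 * (Q ω)^2 + W ω := by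
    intro ω
    rw [hWval ω, hdec ω]
    set x := u (T₀+1) ω
    nlinarith [sq_nonneg (α*(α*x^2) + 2*α*(L ω*x + R ω)), sq_nonneg (α*(L ω*x) - α*(R ω)),
      sq_nonneg (α^2*x^2 - 4*(L ω)^2), sq_nonneg x, sq_nonneg α, hαpos.le]
  -- measurability of W
  have hWmeas : Measurable W := by
    have h1 := Wf_measurable_comp T₀
    have : W = (fun v : ((Finset.Icc 1 T₀ : Finset ℕ) → ℝ) =>
        Wf T₀ (fun i => if h : i ∈ Finset.Icc 1 T₀ then v ⟨i, h⟩ else 0))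
          ∘ (fun ω (i : (Finset.Icc 1 T₀ : Finset ℕ)) => u i ω) := by
      funext ω
      simp only [Function.comp_apply, hW]
      apply Wf_congr
      intro i h1i h2i
      rw [dif_pos (Finset.mem_Icc.2 ⟨h1i, h2i⟩)]
    rw [this]
    exact h1.comp (measurable_pi_lambda _ (fun i => hm i))
  -- choose the truncation level
  have hMM : ∃ m : ℕ, 0 < ℙ {ω | W ω ≤ (m:ℝ)} := by
    by_contra h
    push_neg at h
    have h0 : ∀ m : ℕ, ℙ {ω | W ω ≤ (m:ℝ)} = 0 := fun m => le_antisymm (h m) (by positivity)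
    have hU : ℙ (⋃ m : ℕ, {ω | W ω ≤ (m:ℝ)}) = 0 := measure_iUnion_null h0
    have huniv : (⋃ m : ℕ, {ω | W ω ≤ (m:ℝ)}) = Set.univ := by
      apply Set.eq_univ_of_forall
      intro ω
      exact Set.mem_iUnion.2 ⟨⌈W ω⌉₊, show W ω ≤ _ from Nat.le_ceil _⟩
    rw [huniv, measure_univ] at hU
    simp at hU
  obtain ⟨m, hm0⟩ := hMM
  set χ : Ω → ℝ := fun ω => if W ω ≤ (m:ℝ) then 1 else 0 with hχ
  have hχmeas : Measurable χ :=
    Measurable.ite (measurableSet_le hWmeas measurable_const) measurable_const measurable_const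
  -- independence of χ and u (T₀+1) ^ 4
  have hIndep : IndepFun χ (fun ω => (u (T₀+1) ω)^4) ℙ := by
    have hdisj : Disjoint (Finset.Icc 1 T₀) ({T₀+1} : Finset ℕ) := by
      rw [Finset.disjoint_singleton_right, Finset.mem_Icc]; omega
    have base := hind.indepFun_finset (Finset.Icc 1 T₀) {T₀+1} hdisj hm
    have hφ : Measurable (fun v : ((Finset.Icc 1 T₀ : Finset ℕ) → ℝ) =>
        if Wf T₀ (fun i => if h : i ∈ Finset.Icc 1 T₀ then v ⟨i, h⟩ else 0) ≤ (m:ℝ)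
          then (1:ℝ) else 0) :=
      Measurable.ite (measurableSet_le (Wf_measurable_comp T₀) measurable_const)
        measurable_const measurable_const
    have hψ : Measurable (fun v : ((({T₀+1} : Finset ℕ) : Finset ℕ) → ℝ) =>
        (v ⟨T₀+1, Finset.mem_singleton_self _⟩)^4) :=
      (measurable_pi_apply _).pow_const 4
    have H := base.comp hφ hψ
    have heq : ((fun v : ((Finset.Icc 1 T₀ : Finset ℕ) → ℝ) =>
        if Wf T₀ (fun i => if h : i ∈ Finset.Icc 1 T₀ then v ⟨i, h⟩ else 0) ≤ (m:ℝ)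
          then (1:ℝ) else 0) ∘ (fun ω (i : (Finset.Icc 1 T₀ : Finset ℕ)) => u i ω)) = χ := by
      funext ω
      simp only [Function.comp_apply, hχ, hW]
      congr 1
      rw [show Wf T₀ (fun i => if h : i ∈ Finset.Icc 1 T₀ then u i ω else 0)
          = Wf T₀ (fun s => u s ω) from
        Wf_congr _ _ _ (fun i h1i h2i => dif_pos (Finset.mem_Icc.2 ⟨h1i, h2i⟩))]
    rw [heq] at H
    exact H
  -- integrability of χ * u⁴
  have hIntg : Integrable (fun ω => (4 * α^2 * (Q ω)^2 + (m:ℝ)) / α^4) := by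
    apply Integrable.div_const
    exact (hInt.const_mul (4 * α^2)).add (integrable_const _)
  have hIntχu4 : Integrable (χ * fun ω => (u (T₀+1) ω)^4) := by
    apply Integrable.mono' hIntg
    · exact (hχmeas.mul ((hm _).pow_const 4)).aestronglyMeasurable
    · apply ae_of_all
      intro ω
      have hnn : 0 ≤ χ ω * (u (T₀+1) ω)^4 := by
        apply mul_nonneg _ (by positivity)
        simp only [hχ]; split_ifs <;> norm_num
      rw [Pi.mul_apply, Real.norm_eq_abs, abs_of_nonneg hnn]
      by_cases hωE : W ω ≤ (m:ℝ)
      · simp only [hχ, if_pos hωE, one_mul]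
        rw [le_div_iff₀ (by positivity : (0:ℝ) < α^4)]
        nlinarith [hpt ω, hωE, sq_nonneg (Q ω)]
      · simp only [hχ, if_neg hωE, zero_mul]
        have : (0:ℝ) ≤ (m:ℝ) := by positivity
        positivity
  -- χ is not a.e. zero
  have hne : ¬ χ =ᵐ[ℙ] 0 := by
    intro hae
    have h1 : ∀ᵐ ω ∂(ℙ : Measure Ω), ω ∉ {ω | W ω ≤ (m:ℝ)} := by
      filter_upwards [hae] with ω hω
      intro hc
      simp only [hχ] at hω
      simp only [if_pos hc, Pi.zero_apply] at hω
      norm_num at hω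
    have := measure_eq_zero_iff_ae_notMem.2 h1
    rw [this] at hm0
    exact lt_irrefl _ hm0
  have hIu4 : Integrable (fun ω => (u (T₀+1) ω)^4) :=
    hIndep.integrable_right_of_integrable_op (· * ·) (1 : NNReal) one_ne_zero
      (fun x y => by simp [enorm_mul]) hIntχu4 hχmeas.aestronglyMeasurable
      ((hm _).pow_const 4).aestronglyMeasurable hne
  exact hL4 (((hid 0 (T₀+1)).comp (measurable_id.pow_const 4)).integrable_iff.mpr hIu4)

/-- Uniform second-moment bound: for IID mean-zero `(u_t)` with variance `σ_x² ≤ K` and fourth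
moments `≤ K`, `E[(T⁻¹ ∑_{t=1}^T u_t x̃_t)²] ≤ C` with `C` depending only on `K`, not on `T`. -/
theorem stmt_13 (K : ℝ) (hK : 0 < K) :
    ∃ C : ℝ, ∀ (T : ℕ), 0 < T →
      ∀ (Ω : Type) [MeasureSpace Ω] [IsProbabilityMeasure (ℙ : Measure Ω)]
        (u : ℕ → Ω → ℝ) (σx : ℝ),
        (∀ t, Measurable (u t)) →
        iIndepFun u ℙ →
        (∀ s t, IdentDistrib (u s) (u t) ℙ ℙ) →
        (∀ t, ∫ ω, u t ω = 0) →
        (∀ t, ∫ ω, (u t ω) ^ 2 = σx ^ 2) → σx ^ 2 ≤ K →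
        (∀ t, ∫ ω, (u t ω) ^ 4 ≤ K) →
        (∫ ω, ((T : ℝ)⁻¹ * ∑ t ∈ Finset.Icc 1 T, u t ω *
            ((∑ s ∈ Finset.Icc 1 t, u s ω)
              - (T : ℝ)⁻¹ * ∑ r ∈ Finset.Icc 1 T, ∑ s ∈ Finset.Icc 1 r, u s ω)) ^ 2) ≤ C := by
  use 3 * (K + K ^ 2)
  intro T hT Ω _ _ u σx hm hind hid hmean hvar hσK h4
  by_cases hL4 : Integrable (fun ω => (u 0 ω)^4)
  · exact caseA K hK T hT Ω u σx hm hind hid hmean hvar hσK h4 hL4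
  · rcases Nat.lt_or_ge T 2 with h2 | h2
    · have hT1 : T = 1 := by omega
      subst hT1
      rw [show (fun ω => (((1:ℕ) : ℝ)⁻¹ * ∑ t ∈ Finset.Icc 1 1, u t ω *
            ((∑ s ∈ Finset.Icc 1 t, u s ω)
              - ((1:ℕ) : ℝ)⁻¹ * ∑ r ∈ Finset.Icc 1 1, ∑ s ∈ Finset.Icc 1 r, u s ω)) ^ 2)
          = fun _ : Ω => (0:ℝ) from funext fun ω => by
            norm_num [Finset.Icc_self]]
      rw [integral_zero]
      nlinarith [hK, sq_nonneg K]
    · obtain ⟨k, rfl⟩ : ∃ k, T = k + 1 + 1 := ⟨T - 2, by omega⟩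
      by_cases hI : Integrable (fun ω => (((k+1+1 : ℕ) : ℝ)⁻¹ *
          ∑ t ∈ Finset.Icc 1 (k+1+1), u t ω *
            ((∑ s ∈ Finset.Icc 1 t, u s ω)
              - ((k+1+1 : ℕ) : ℝ)⁻¹ *
                ∑ r ∈ Finset.Icc 1 (k+1+1), ∑ s ∈ Finset.Icc 1 r, u s ω)) ^ 2)
      · exact (caseB k Ω u hm hind hid hL4 hI).elim
      · rw [integral_undef hI]
        nlinarith [hK, sq_nonneg K]
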